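/- Suppose that for each integer k ≥ 3 a polynomial ψ_k ∈ ℤ[X] is given such that in the field of rational functions ℚ(q) one has Φ_k(q) = q^{φ(k)/2} · ψ_k(q + q⁻¹), where Φ_k is the k-th cyclotomic polynomial. Then for every n ≥ 1 the quantum number factors as [n] = ∏ ψ_k in ℤ[δ], the product ranging over all divisors k of 2n with k ≥ 3. -/

import Mathlib

open Polynomial

/-- The quantum number polynomials `[n] ∈ ℤ[δ]`, defined by `[0] = 0`, `[1] = 1`,
`[n+2] = δ·[n+1] − [n]`. -/
noncomputable def qn : ℕ → Polynomial ℤ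
  | 0 => 0
  | 1 => 1
  | n + 2 => X * qn (n + 1) - qn n

namespace QnAux

open IntermediateField

/-- Evaluation at `RatFunc.X` agrees with the algebra map from `ℚ[X]`. -/
lemma aeval_ratfunc_X (p : Polynomial ℚ) :
    aeval (RatFunc.X : RatFunc ℚ) p = algebraMap (Polynomial ℚ) (RatFunc ℚ) p := by
  have h := Polynomial.aeval_algHom_apply
    (IsScalarTower.toAlgHom ℚ (Polynomial ℚ) (RatFunc ℚ)) (X : Polynomial ℚ) p
  simpa [RatFunc.algebraMap_X] using h

lemma u_transcendental : Transcendental ℚ (RatFunc.X : RatFunc ℚ) := by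
  rw [transcendental_iff_injective]
  intro p q hpq
  rw [aeval_ratfunc_X, aeval_ratfunc_X] at hpq
  exact IsFractionRing.injective (Polynomial ℚ) (RatFunc ℚ) hpq

lemma y_transcendental :
    Transcendental ℚ ((RatFunc.X : RatFunc ℚ) + (RatFunc.X : RatFunc ℚ)⁻¹) := by
  rintro ⟨p, hp, hp0⟩
  set u : RatFunc ℚ := RatFunc.X with hudef
  set d := p.natDegree with hd
  set Q : Polynomial ℚ :=
    ∑ i ∈ Finset.range (d + 1), C (p.coeff i) * (X ^ (d - i) * (X ^ 2 + 1) ^ i) with hQ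
  have hune : u ≠ 0 := RatFunc.X_ne_zero
  have hyu : (u + u⁻¹) * u = u ^ 2 + 1 := by
    rw [add_mul, inv_mul_cancel₀ hune]; ring
  have hterm : ∀ i ∈ Finset.range (d + 1),
      u ^ (d - i) * (u ^ 2 + 1) ^ i = u ^ d * (u + u⁻¹) ^ i := by
    intro i hi
    rw [Finset.mem_range] at hi
    have h1 : u ^ d = u ^ (d - i) * u ^ i := by rw [← pow_add]; congr 1; omega
    calc u ^ (d - i) * (u ^ 2 + 1) ^ i = u ^ (d - i) * ((u + u⁻¹) * u) ^ i := by rw [hyu]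
      _ = u ^ (d - i) * u ^ i * (u + u⁻¹) ^ i := by rw [mul_pow]; ring
      _ = u ^ d * (u + u⁻¹) ^ i := by rw [← h1]
  have hQeval : aeval u Q = 0 := by
    rw [hQ, map_sum]
    have hc : ∀ i ∈ Finset.range (d + 1),
        aeval u (C (p.coeff i) * (X ^ (d - i) * (X ^ 2 + 1) ^ i)) =
          algebraMap ℚ (RatFunc ℚ) (p.coeff i) * (u ^ d * (u + u⁻¹) ^ i) := by
      intro i hi
      simp only [map_mul, map_add, map_pow, aeval_X, aeval_C, map_one]
      rw [← hterm i hi]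
      try ring
    rw [Finset.sum_congr rfl hc]
    have hmulsmul : ∀ i ∈ Finset.range (d + 1),
        algebraMap ℚ (RatFunc ℚ) (p.coeff i) * (u ^ d * (u + u⁻¹) ^ i) =
          u ^ d * (algebraMap ℚ (RatFunc ℚ) (p.coeff i) * (u + u⁻¹) ^ i) :=
      fun i _ => by ring
    rw [Finset.sum_congr rfl hmulsmul, ← Finset.mul_sum]
    simp only [← Algebra.smul_def]
    rw [← Polynomial.aeval_eq_sum_range (x := u + u⁻¹), hp0, mul_zero]
  have hinj : Function.Injective (aeval u : Polynomial ℚ →ₐ[ℚ] RatFunc ℚ) :=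
    transcendental_iff_injective.mp u_transcendental
  have hQ0 : Q = 0 := hinj (by rw [hQeval]; simp)
  have hmon : ((X : Polynomial ℚ) ^ 2 + 1).Monic := by
    apply Polynomial.monic_X_pow_add
    exact lt_of_le_of_lt degree_one_le (by norm_num)
  have hndeg : ((X : Polynomial ℚ) ^ 2 + 1).natDegree = 2 := by
    rw [show ((X : Polynomial ℚ) ^ 2 + 1) = X ^ 2 + C 1 by rw [map_one]]
    exact natDegree_X_pow_add_C
  have hcoeff : Q.coeff (2 * d) = p.coeff d := by
    rw [hQ, Polynomial.finset_sum_coeff]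
    rw [Finset.sum_eq_single d]
    · rw [Nat.sub_self, pow_zero, one_mul, coeff_C_mul]
      have hdeg : ((((X : Polynomial ℚ) ^ 2 + 1)) ^ d).natDegree = 2 * d := by
        rw [natDegree_pow, hndeg, Nat.mul_comm]
      have h1 : ((((X : Polynomial ℚ) ^ 2 + 1)) ^ d).coeff (2 * d) = 1 := by
        rw [← hdeg]
        exact (hmon.pow d).coeff_natDegree
      rw [h1, mul_one]
    · intro i hi hne
      rw [Finset.mem_range] at hi
      apply coeff_eq_zero_of_natDegree_lt
      have h1 : (C (p.coeff i) * (X ^ (d - i) * ((X : Polynomial ℚ) ^ 2 + 1) ^ i)).natDegree ≤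
          0 + ((d - i) + 2 * i) := by
        refine natDegree_mul_le.trans (add_le_add (natDegree_C _).le ?_)
        refine natDegree_mul_le.trans (add_le_add (natDegree_X_pow _).le ?_)
        rw [natDegree_pow, hndeg, Nat.mul_comm]
      omega
    · intro hnot
      exact absurd (Finset.mem_range.mpr (by omega)) hnot
  rw [hQ0, coeff_zero] at hcoeff
  exact hp (leadingCoeff_eq_zero.mp hcoeff.symm)

/-- Reduce integer `aeval` to rational `aeval`. -/
lemma aeval_int_eq (p : Polynomial ℤ) (x : RatFunc ℚ) :
    aeval x p = aeval x (p.map (Int.castRingHom ℚ)) := by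
  have h : (algebraMap ℚ (RatFunc ℚ)).comp (Int.castRingHom ℚ) =
      algebraMap ℤ (RatFunc ℚ) := RingHom.ext_int _ _
  rw [aeval_def, aeval_def, eval₂_map, h]

lemma aeval_y_injective (p q : Polynomial ℤ)
    (h : aeval ((RatFunc.X : RatFunc ℚ) + (RatFunc.X : RatFunc ℚ)⁻¹) p =
      aeval ((RatFunc.X : RatFunc ℚ) + (RatFunc.X : RatFunc ℚ)⁻¹) q) : p = q := by
  rw [aeval_int_eq p, aeval_int_eq q] at h
  have h2 := transcendental_iff_injective.mp y_transcendental h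
  exact Polynomial.map_injective _ Int.cast_injective h2

lemma u_sq_sub_one_ne_zero : (RatFunc.X : RatFunc ℚ) ^ 2 - 1 ≠ 0 := by
  intro h
  apply u_transcendental
  refine ⟨X ^ 2 - 1, ?_, by simpa using h⟩
  intro hC
  have := congrArg (fun p => Polynomial.coeff p 2) hC
  simp [Polynomial.coeff_one] at this

/-- Key evaluation: `[n](u + u⁻¹) · (u² − 1) · uⁿ = u·(u^{2n} − 1)`. -/
lemma qn_eval : ∀ n : ℕ,
    aeval ((RatFunc.X : RatFunc ℚ) + (RatFunc.X : RatFunc ℚ)⁻¹) (qn n) *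
      ((RatFunc.X : RatFunc ℚ) ^ 2 - 1) * (RatFunc.X : RatFunc ℚ) ^ n =
      (RatFunc.X : RatFunc ℚ) * ((RatFunc.X : RatFunc ℚ) ^ (2 * n) - 1)
  | 0 => by simp [qn]
  | 1 => by simp [qn]; ring
  | (n + 2) => by
    have h1 := qn_eval (n + 1)
    have h0 := qn_eval n
    set u : RatFunc ℚ := RatFunc.X with hu
    have hune : u ≠ 0 := RatFunc.X_ne_zero
    have hyu : (u + u⁻¹) * u = u ^ 2 + 1 := by field_simp
    show aeval (u + u⁻¹) (qn (n + 2)) * (u ^ 2 - 1) * u ^ (n + 2) = u * (u ^ (2 * (n + 2)) - 1)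
    rw [show qn (n + 2) = X * qn (n + 1) - qn n from rfl]
    simp only [map_sub, map_mul, aeval_X]
    have e : ((u + u⁻¹) * aeval (u + u⁻¹) (qn (n + 1)) - aeval (u + u⁻¹) (qn n)) *
        (u ^ 2 - 1) * u ^ (n + 2) =
        ((u + u⁻¹) * u) * (aeval (u + u⁻¹) (qn (n + 1)) * (u ^ 2 - 1) * u ^ (n + 1)) -
          u ^ 2 * (aeval (u + u⁻¹) (qn n) * (u ^ 2 - 1) * u ^ n) := by ring
    rw [e, hyu, h1, h0]
    ring

end QnAux

/-- If for each `k ≥ 3` the polynomial `ψ k ∈ ℤ[X]` satisfies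
`Φ_k(q) = q^(φ(k)/2) · ψ_k(q + q⁻¹)` in `ℚ(q)`, then for every `n ≥ 1` the quantum number
factors as `[n] = ∏_{k ∣ 2n, k ≥ 3} ψ_k` in `ℤ[δ]`. -/
theorem qn_eq_prod_psi (ψ : ℕ → Polynomial ℤ)
    (hψ : ∀ k : ℕ, 3 ≤ k →
      aeval (RatFunc.X : RatFunc ℚ) (Polynomial.cyclotomic k ℤ) =
        (RatFunc.X : RatFunc ℚ) ^ (Nat.totient k / 2) *
          aeval ((RatFunc.X : RatFunc ℚ) + (RatFunc.X : RatFunc ℚ)⁻¹) (ψ k))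
    (n : ℕ) (hn : 1 ≤ n) :
    qn n = ∏ k ∈ (Nat.divisors (2 * n)).filter (fun k => 3 ≤ k), ψ k := by
  set u : RatFunc ℚ := RatFunc.X with hu
  set y : RatFunc ℚ := u + u⁻¹ with hy
  have hune : u ≠ 0 := RatFunc.X_ne_zero
  have h2n : 0 < 2 * n := by omega
  set S := (Nat.divisors (2 * n)).filter (fun k => 3 ≤ k) with hS
  -- the complementary filter is {1, 2}
  have hcompl : (Nat.divisors (2 * n)).filter (fun k => ¬ 3 ≤ k) = {1, 2} := by
    ext k
    simp only [Finset.mem_filter, Nat.mem_divisors, Finset.mem_insert, Finset.mem_singleton]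
    constructor
    · rintro ⟨⟨hdvd, hne⟩, hk⟩
      have : k ≠ 0 := by rintro rfl; exact hne (zero_dvd_iff.mp hdvd)
      omega
    · rintro (rfl | rfl)
      · exact ⟨⟨one_dvd _, h2n.ne'⟩, by omega⟩
      · exact ⟨⟨⟨n, rfl⟩, h2n.ne'⟩, by omega⟩
  -- total product of cyclotomics
  have htot : ∏ k ∈ Nat.divisors (2 * n), aeval u (Polynomial.cyclotomic k ℤ)
      = u ^ (2 * n) - 1 := by
    rw [← map_prod, Polynomial.prod_cyclotomic_eq_X_pow_sub_one h2n]
    simp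
  -- sum of totients over S
  have hsumtot : ∑ k ∈ S, Nat.totient k = 2 * n - 2 := by
    have hsplit := Finset.sum_filter_add_sum_filter_not (Nat.divisors (2 * n))
      (fun k => 3 ≤ k) Nat.totient
    rw [hcompl, ← hS, Finset.sum_pair (by norm_num : (1:ℕ) ≠ 2), Nat.sum_totient] at hsplit
    norm_num [Nat.totient_one, Nat.totient_two] at hsplit
    omega
  have heven : ∀ k ∈ S, Even (Nat.totient k) := by
    intro k hk
    rw [hS, Finset.mem_filter] at hk
    exact Nat.totient_even (by omega)
  have hhalf : ∑ k ∈ S, Nat.totient k / 2 = n - 1 := by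
    have h2 : 2 * ∑ k ∈ S, Nat.totient k / 2 = ∑ k ∈ S, Nat.totient k := by
      rw [Finset.mul_sum]
      refine Finset.sum_congr rfl fun k hk => ?_
      obtain ⟨r, hr⟩ := heven k hk
      omega
    omega
  -- product over S via hψ
  have hSprod : ∏ k ∈ S, aeval u (Polynomial.cyclotomic k ℤ)
      = u ^ (n - 1) * aeval y (∏ k ∈ S, ψ k) := by
    rw [map_prod]
    have : ∏ k ∈ S, aeval u (Polynomial.cyclotomic k ℤ)
        = ∏ k ∈ S, (u ^ (Nat.totient k / 2) * aeval y (ψ k)) := by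
      refine Finset.prod_congr rfl fun k hk => ?_
      rw [hS, Finset.mem_filter] at hk
      exact hψ k hk.2
    rw [this, Finset.prod_mul_distrib, Finset.prod_pow_eq_pow_sum, hhalf]
  -- product over the complement
  have hCprod : ∏ k ∈ (Nat.divisors (2 * n)).filter (fun k => ¬ 3 ≤ k),
      aeval u (Polynomial.cyclotomic k ℤ) = (u - 1) * (u + 1) := by
    rw [hcompl, Finset.prod_pair (by norm_num : (1:ℕ) ≠ 2)]
    simp [Polynomial.cyclotomic_one, Polynomial.cyclotomic_two]
  -- combine
  have hsplit := Finset.prod_filter_mul_prod_filter_not (Nat.divisors (2 * n))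
    (fun k => 3 ≤ k) (fun k => aeval u (Polynomial.cyclotomic k ℤ))
  rw [← hS] at hsplit
  rw [htot, hSprod, hCprod] at hsplit
  -- hsplit : u^(n-1) * aeval y P * ((u-1)*(u+1)) = u^(2n) - 1
  have hq := QnAux.qn_eval n
  rw [← hu, ← hy] at hq
  have hkey : aeval y (qn n) * (u ^ 2 - 1) * u ^ n
      = aeval y (∏ k ∈ S, ψ k) * (u ^ 2 - 1) * u ^ n := by
    rw [hq, ← hsplit]
    have hn1 : u ^ n = u * u ^ (n - 1) := by
      conv_lhs => rw [show n = (n - 1) + 1 by omega]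
      rw [pow_succ]
      ring
    rw [hn1]
    ring
  have hcancel : aeval y (qn n) = aeval y (∏ k ∈ S, ψ k) := by
    have h1 := mul_right_cancel₀ (pow_ne_zero n hune) hkey
    exact mul_right_cancel₀ QnAux.u_sq_sub_one_ne_zero h1
  exact QnAux.aeval_y_injective _ _ hcancel
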